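/- Let F be a field, let y₁,…,yₙ ∈ F be nonzero, let B be an n×n skew-symmetric integer matrix, and let k be an index. Assume the mutated element μ_k(y)_k is also nonzero. Then applying the mutation at k to the pair (μ_k(y), μ_k(B)) returns the original tuple (y₁,…,yₙ); that is, cluster variable mutation at k is an involution. -/

import Mathlib

/-- Fomin–Zelevinsky matrix mutation at index `k`. -/
def matrixMutation {n : ℕ} (B : Matrix (Fin n) (Fin n) ℤ) (k : Fin n) :
    Matrix (Fin n) (Fin n) ℤ :=
  fun i j =>
    if i = k ∨ j = k then -B i j
    else B i j + max (B i k) 0 * max (B k j) 0 - max (-B i k) 0 * max (-B k j) 0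

/-- Fomin–Zelevinsky mutation of a cluster `y` at index `k` (exchange relation). -/
noncomputable def clusterMutation {n : ℕ} {F : Type*} [Field F]
    (y : Fin n → F) (B : Matrix (Fin n) (Fin n) ℤ) (k : Fin n) : Fin n → F :=
  fun i =>
    if i = k then
      ((∏ j, y j ^ (max (B j k) 0).toNat) + (∏ j, y j ^ (max (-B j k) 0).toNat)) / y k
    else y i

theorem clusterMutation_involutive {n : ℕ} {F : Type*} [Field F]
    (y : Fin n → F) (B : Matrix (Fin n) (Fin n) ℤ) (k : Fin n)
    (hy : ∀ i, y i ≠ 0) (hB : ∀ i j, B j i = -B i j)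
    (hk : clusterMutation y B k k ≠ 0) :
    clusterMutation (clusterMutation y B k) (matrixMutation B k) k = y := by
  have hBkk : B k k = 0 := by
    have := hB k k; omega
  set N : F := (∏ j, y j ^ (max (B j k) 0).toNat) +
      (∏ j, y j ^ (max (-B j k) 0).toNat) with hN
  have hyk : clusterMutation y B k k = N / y k := by
    simp [clusterMutation]; rfl
  have hNne : N ≠ 0 := by
    intro h
    apply hk
    rw [hyk, h, zero_div]
  funext i
  by_cases hi : i = k
  · subst hi
    have h1 : (∏ j, clusterMutation y B i j ^
        (max (matrixMutation B i j i) 0).toNat) =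
        ∏ j, y j ^ (max (-B j i) 0).toNat := by
      apply Finset.prod_congr rfl
      intro j _
      by_cases hj : j = i
      · subst hj
        simp [matrixMutation, hBkk]
      · simp [matrixMutation, clusterMutation, hj]
    have h2 : (∏ j, clusterMutation y B i j ^
        (max (-matrixMutation B i j i) 0).toNat) =
        ∏ j, y j ^ (max (B j i) 0).toNat := by
      apply Finset.prod_congr rfl
      intro j _
      by_cases hj : j = i
      · subst hj
        simp [matrixMutation, hBkk]
      · simp [matrixMutation, clusterMutation, hj]
    show (if (i : Fin n) = i then _ else _) = y i
    rw [if_pos rfl, h1, h2, hyk]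
    rw [add_comm, ← hN]
    field_simp
  · simp [clusterMutation, hi]
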